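/- For minimal length coset representatives x, y of the affine symmetric group modulo the finite symmetric group whose n-cores both have first part equal to k, x ≥ y in strong Bruhat order if and only if Φ_n(x) ≥ Φ_n(y) in strong Bruhat order on the quotient of the affine symmetric group of rank n−1. -/

import Mathlib

/-! Partitions and cores, represented by their row-length functions `ℕ → ℕ` (0-indexed rows). -/

/-- The length of column `j` (the conjugate partition). -/
noncomputable def colLen (f : ℕ → ℕ) (j : ℕ) : ℕ := Nat.card {i : ℕ | j < f i}

/-- `f` is a partition: weakly decreasing and eventually zero. -/
def IsPartition (f : ℕ → ℕ) : Prop := Antitone f ∧ ∃ N, ∀ i, N ≤ i → f i = 0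

/-- Hook length of the box `(i, j)` (0-indexed). -/
noncomputable def hook (f : ℕ → ℕ) (i j : ℕ) : ℕ := (f i - j) + (colLen f j - i) - 1

/-- `f` is an `m`-core: no hook length of a box of `f` is divisible by `m`. -/
def IsCore (m : ℕ) (f : ℕ → ℕ) : Prop := ∀ i j, j < f i → ¬ (m ∣ hook f i j)

/-- `f` is symmetric: it equals its conjugate. -/
def IsSymmetric (f : ℕ → ℕ) : Prop := ∀ j, colLen f j = f j

/-- Residue (mod `2n`) of the last box of row `i`, namely `j - i` for `j = f i - 1`. -/
noncomputable def rowRes (n : ℕ) (f : ℕ → ℕ) (i : ℕ) : ZMod (2*n) :=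
  (((f i : ℤ) - 1 - (i : ℤ) : ℤ) : ZMod (2*n))

/-- Residue (mod `2n`) of the last box of column `j`. -/
noncomputable def colRes (n : ℕ) (f : ℕ → ℕ) (j : ℕ) : ZMod (2*n) :=
  (((j : ℤ) - ((colLen f j : ℤ) - 1) : ℤ) : ZMod (2*n))

/-- Row `i` survives: it is nonempty and does not end in the same residue as the first row. -/
noncomputable def keptRow (n : ℕ) (f : ℕ → ℕ) (i : ℕ) : Prop :=
  0 < f i ∧ rowRes n f i ≠ rowRes n f 0

/-- Column `j` survives: it is nonempty and does not end in the same residue as the first column. -/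
noncomputable def keptCol (n : ℕ) (f : ℕ → ℕ) (j : ℕ) : Prop :=
  0 < colLen f j ∧ colRes n f j ≠ colRes n f 0

/-- The map `Φₙ` on cores: delete all rows ending in the same residue (mod `2n`) as the
first row and all columns ending in the same residue as the first column.  The `i`-th row of
the result is the number of surviving columns meeting the `i`-th surviving row. -/
noncomputable def PhiCore (n : ℕ) (f : ℕ → ℕ) : ℕ → ℕ := fun i =>
  Nat.card {j : ℕ | keptRow n f (Nat.nth (keptRow n f) i) ∧ keptCol n f j ∧
    j < f (Nat.nth (keptRow n f) i)}

/-- Delete from `f` all columns ending in the same residue (mod `2n`) as the first column. -/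
noncomputable def deleteColsCore (n : ℕ) (f : ℕ → ℕ) : ℕ → ℕ := fun i =>
  Nat.card {j : ℕ | keptCol n f j ∧ j < f i}

/-- Whether row `i` of the `n`-core `f` survives the Berg–Jones–Vazirani map: the row is
nonempty and its first-column hook length is not congruent to that of the first row mod `n`. -/
noncomputable def keptRowA (n : ℕ) (f : ℕ → ℕ) (i : ℕ) : Prop :=
  0 < f i ∧ ((hook f i 0 : ZMod n) ≠ (hook f 0 0 : ZMod n))

/-- The Berg–Jones–Vazirani map on `n`-cores: delete all rows `i` with
`h_{(i,1)} ≡ h_{(1,1)} (mod n)`. -/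
noncomputable def PhiA (n : ℕ) (f : ℕ → ℕ) : ℕ → ℕ := fun i =>
  Nat.card {j : ℕ | keptRowA n f (Nat.nth (keptRowA n f) i) ∧
    j < f (Nat.nth (keptRowA n f) i)}

namespace Stmt16Aux

/-- Beta sequence of a partition: `i ↦ f i - i`. -/
noncomputable def bseq (f : ℕ → ℕ) (i : ℕ) : ℤ := (f i : ℤ) - i

/-- The residue class of `k` mod `n`, intersected with `(-∞, k]`. -/
def Cset (n k : ℕ) : Set ℤ := {x | x ≤ (k : ℤ) ∧ ((x : ZMod n) = ((k : ℤ) : ZMod n))}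

lemma initSeg_eq_Iio (S : Set ℕ) (hfin : S.Finite)
    (hlow : ∀ a b : ℕ, a ≤ b → b ∈ S → a ∈ S) :
    S = Set.Iio (Nat.card S) := by
  rw [Nat.card_coe_set_eq]
  ext i
  simp only [Set.mem_Iio]
  constructor
  · intro hi
    have h1 : Set.Iic i ⊆ S := fun a ha => hlow a i (Set.mem_Iic.mp ha) hi
    have h3 := Set.ncard_le_ncard h1 hfin
    have h2 : (Set.Iic i).ncard = i + 1 := by
      rw [← Finset.coe_Iic, Set.ncard_coe_finset, Nat.card_Iic]
    omega
  · intro hi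
    by_contra hS
    have h1 : S ⊆ Set.Iio i := by
      intro a ha
      simp only [Set.mem_Iio]
      by_contra h2
      exact hS (hlow i a (le_of_not_gt h2) ha)
    have h3 := Set.ncard_le_ncard h1 (Set.finite_Iio i)
    have h2 : (Set.Iio i).ncard = i := by
      rw [← Finset.coe_Iio, Set.ncard_coe_finset, Nat.card_Iio]
    omega

lemma countset_finite (h : ℕ → ℕ) (hh : Antitone h) (t : ℤ) :
    {i : ℕ | t ≤ (h i : ℤ) - i}.Finite := by
  apply Set.Finite.subset (Set.finite_Iio ((h 0 + 1 - t).toNat))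
  intro i hi
  simp only [Set.mem_setOf_eq] at hi
  have := hh (Nat.zero_le i)
  simp only [Set.mem_Iio]
  omega

lemma count_le_iff (h₁ h₂ : ℕ → ℕ) (ha₁ : Antitone h₁) (ha₂ : Antitone h₂) :
    (∀ i, h₂ i ≤ h₁ i) ↔
      ∀ t : ℤ, Nat.card {i : ℕ | t ≤ (h₂ i : ℤ) - i} ≤ Nat.card {i : ℕ | t ≤ (h₁ i : ℤ) - i} := by
  constructor
  · intro hle t
    rw [Nat.card_coe_set_eq, Nat.card_coe_set_eq]
    apply Set.ncard_le_ncard _ (countset_finite h₁ ha₁ t)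
    intro i hi
    simp only [Set.mem_setOf_eq] at hi ⊢
    have := hle i
    omega
  · intro hc i
    set t : ℤ := (h₂ i : ℤ) - i with ht
    have mem2 : Set.Iic i ⊆ {j : ℕ | t ≤ (h₂ j : ℤ) - j} := by
      intro a ha
      have h4 := ha₂ (Set.mem_Iic.mp ha)
      have h5 : (a : ℤ) ≤ i := by exact_mod_cast Set.mem_Iic.mp ha
      simp only [Set.mem_setOf_eq]
      omega
    have c2 : i + 1 ≤ Nat.card {j : ℕ | t ≤ (h₂ j : ℤ) - j} := by
      rw [Nat.card_coe_set_eq]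
      have := Set.ncard_le_ncard mem2 (countset_finite h₂ ha₂ t)
      have h2 : (Set.Iic i).ncard = i + 1 := by
        rw [← Finset.coe_Iic, Set.ncard_coe_finset, Nat.card_Iic]
      omega
    have c1 := le_trans c2 (hc t)
    have hseg := initSeg_eq_Iio {j : ℕ | t ≤ (h₁ j : ℤ) - j} (countset_finite h₁ ha₁ t)
      (by
        intro a b hab hb
        simp only [Set.mem_setOf_eq] at hb ⊢
        have h4 := ha₁ hab
        have h5 : (a : ℤ) ≤ b := by exact_mod_cast hab
        omega)
    have : i ∈ {j : ℕ | t ≤ (h₁ j : ℤ) - j} := by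
      rw [hseg]
      exact Set.mem_Iio.mpr (lt_of_lt_of_le (Nat.lt_succ_self i) c1)
    simp only [Set.mem_setOf_eq] at this
    omega

variable {f : ℕ → ℕ} {n k : ℕ}

lemma colLen_set_finite (hfp : IsPartition f) (j : ℕ) : {i : ℕ | j < f i}.Finite := by
  obtain ⟨N, hN⟩ := hfp.2
  apply (Set.finite_Iio N).subset
  intro a ha
  simp only [Set.mem_setOf_eq] at ha
  simp only [Set.mem_Iio]
  by_contra h
  rw [hN a (le_of_not_gt h)] at ha; omega

lemma lt_colLen_iff (hfp : IsPartition f) (i j : ℕ) : i < colLen f j ↔ j < f i := by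
  have hseg := initSeg_eq_Iio {i : ℕ | j < f i} (colLen_set_finite hfp j)
    (fun a b hab hb => lt_of_lt_of_le hb (hfp.1 hab))
  have hc : colLen f j = Nat.card {i : ℕ | j < f i} := rfl
  constructor
  · intro h
    have : i ∈ {i : ℕ | j < f i} := by rw [hseg]; exact Set.mem_Iio.mpr (hc ▸ h)
    exact this
  · intro h
    have : i ∈ Set.Iio (Nat.card {i : ℕ | j < f i}) := hseg ▸ h
    rw [hc]; exact this

lemma colLen_anti (hfp : IsPartition f) : Antitone (colLen f) := by
  intro a b hab
  unfold colLen
  rw [Nat.card_coe_set_eq, Nat.card_coe_set_eq]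
  exact Set.ncard_le_ncard (fun i hi => lt_of_le_of_lt hab hi) (colLen_set_finite hfp a)

lemma zero_of_colLen_le (hfp : IsPartition f) (i : ℕ) (h : colLen f 0 ≤ i) : f i = 0 := by
  by_contra hfi
  have := (lt_colLen_iff hfp i 0).mpr (by omega)
  omega

lemma bseq_strictAnti (hfp : IsPartition f) : StrictAnti (bseq f) := by
  apply strictAnti_nat_of_succ_lt
  intro i
  have := hfp.1 (show i ≤ i + 1 by omega)
  unfold bseq
  push_cast
  omega

lemma bseq_le (hfp : IsPartition f) (i : ℕ) : bseq f i ≤ (f 0 : ℤ) := by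
  have := hfp.1 (Nat.zero_le i)
  unfold bseq; omega

lemma neg_mem_range (hfp : IsPartition f) (x : ℤ) (hx : x ≤ -(colLen f 0 : ℤ)) :
    x ∈ Set.range (bseq f) := by
  refine ⟨(-x).toNat, ?_⟩
  have h1 : colLen f 0 ≤ (-x).toNat := by omega
  have h2 := zero_of_colLen_le hfp _ h1
  unfold bseq
  rw [h2]
  omega

noncomputable def gap (f : ℕ → ℕ) (j : ℕ) : ℤ := (j : ℤ) + 1 - colLen f j

lemma gap_not_mem (hfp : IsPartition f) (j : ℕ) : gap f j ∉ Set.range (bseq f) := by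
  rintro ⟨i, hi⟩
  unfold bseq gap at hi
  by_cases h : i < colLen f j
  · have := (lt_colLen_iff hfp i j).mp h
    omega
  · have := mt (lt_colLen_iff hfp i j).mpr h
    omega

lemma hook_cast (hfp : IsPartition f) {i j : ℕ} (hj : j < f i) :
    (hook f i j : ℤ) = bseq f i - gap f j := by
  have hi : i < colLen f j := (lt_colLen_iff hfp i j).mpr hj
  unfold hook bseq gap
  omega

lemma gap_strictMono (hfp : IsPartition f) : StrictMono (gap f) := by
  apply strictMono_nat_of_lt_succ
  intro j
  have h := colLen_anti hfp (show j ≤ j + 1 by omega)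
  unfold gap
  push_cast
  omega

lemma exists_gap (hfp : IsPartition f) {c : ℤ} (hc : c ∉ Set.range (bseq f)) (i : ℕ)
    (hci : c < bseq f i) : ∃ j, j < f i ∧ gap f j = c := by
  classical
  have hg0 : gap f 0 ≤ c := by
    by_contra h
    have : c ≤ -(colLen f 0 : ℤ) := by unfold gap at h; omega
    exact hc (neg_mem_range hfp c this)
  have hbd : ∀ j : ℕ, gap f j ≤ c → j ≤ (c - 1 + colLen f 0).toNat := by
    intro j hj
    have h1 : colLen f j ≤ colLen f 0 := colLen_anti hfp (Nat.zero_le j)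
    unfold gap at hj
    omega
  obtain ⟨j₀, hj₀, hgr⟩ : ∃ j₀ : ℕ, gap f j₀ ≤ c ∧ c < gap f (j₀ + 1) := by
    refine ⟨Nat.findGreatest (fun j => gap f j ≤ c) ((c - 1 + colLen f 0).toNat), ?_, ?_⟩
    · exact Nat.findGreatest_spec (P := fun j => gap f j ≤ c) (m := 0)
        (Nat.zero_le _) hg0
    · by_contra h
      push_neg at h
      exact Nat.findGreatest_is_greatest (Nat.lt_succ_self _) (hbd _ h) h
  have hs' : c < (j₀ : ℤ) + 2 - colLen f (j₀ + 1) := by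
    unfold gap at hgr; push_cast at hgr; omega
  have heq : gap f j₀ = c := by
    by_contra hne
    have hl' : (j₀ : ℤ) + 1 - colLen f j₀ < c := by
      have := lt_of_le_of_ne hj₀ hne; unfold gap at this; omega
    obtain ⟨i', hi'⟩ : ∃ i' : ℕ, (i' : ℤ) = (j₀ : ℤ) + 1 - c :=
      ⟨((j₀ : ℤ) + 1 - c).toNat, by omega⟩
    have hL1 : colLen f (j₀ + 1) ≤ i' := by omega
    have hL0 : i' < colLen f j₀ := by omega
    have hf1 : j₀ < f i' := (lt_colLen_iff hfp i' j₀).mp hL0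
    have hf2 : ¬ (j₀ + 1 < f i') := mt (lt_colLen_iff hfp i' (j₀ + 1)).mpr (by omega)
    have hfi' : f i' = j₀ + 1 := by omega
    refine hc ⟨i', ?_⟩
    unfold bseq
    rw [hfi']
    push_cast
    omega
  refine ⟨j₀, ?_, heq⟩
  by_contra h
  push_neg at h
  have hLi : colLen f j₀ ≤ i := by
    by_contra h2
    have := (lt_colLen_iff hfp i j₀).mp (lt_of_not_ge h2)
    omega
  have hg : (j₀ : ℤ) + 1 - colLen f j₀ = c := by unfold gap at heq; omega
  unfold bseq at hci
  omega

lemma range_bseq_core_closed (hfp : IsPartition f) (hfc : IsCore n f) (hn : 0 < n)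
    {x : ℤ} (hx : x ∈ Set.range (bseq f)) : x - n ∈ Set.range (bseq f) := by
  by_contra h
  obtain ⟨i, hi⟩ := hx
  have hci : x - n < bseq f i := by rw [hi]; omega
  obtain ⟨j, hj, hgap⟩ := exists_gap hfp h i hci
  have hhook : (hook f i j : ℤ) = n := by
    rw [hook_cast hfp hj, hgap, hi]; ring
  have : hook f i j = n := by exact_mod_cast hhook
  exact hfc i j hj (this ▸ dvd_refl n)

lemma Cset_subset (hfp : IsPartition f) (hfc : IsCore n f) (hn : 0 < n) (hf0 : f 0 = k) :
    Cset n k ⊆ Set.range (bseq f) := by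
  have base : ∀ s : ℕ, ((k : ℤ) - n * s) ∈ Set.range (bseq f) := by
    intro s
    induction s with
    | zero => refine ⟨0, ?_⟩; unfold bseq; rw [hf0]; push_cast; ring
    | succ m ih =>
        have := range_bseq_core_closed hfp hfc hn ih
        convert this using 1
        push_cast; ring
  rintro x ⟨hx1, hx2⟩
  have hdvd : (n : ℤ) ∣ ((k : ℤ) - x) := by
    have : (((k : ℤ) - x : ℤ) : ZMod n) = 0 := by push_cast [hx2]; ring
    exact_mod_cast (ZMod.intCast_zmod_eq_zero_iff_dvd _ n).mp this
  obtain ⟨d, hd⟩ := hdvd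
  have hnd : 0 ≤ (n : ℤ) * d := by omega
  have hd0 : 0 ≤ d := by
    rcases le_or_gt 0 d with h | h
    · exact h
    · nlinarith
  have hx : x = (k : ℤ) - n * (d.toNat : ℤ) := by
    rw [Int.toNat_of_nonneg hd0]; linarith
  rw [hx]
  exact base d.toNat


/-! ### The kept-row predicate in terms of the beta sequence -/

def Qp (n k : ℕ) (f : ℕ → ℕ) : ℕ → Prop := fun i => bseq f i ∉ Cset n k

lemma hook_zmod (hfp : IsPartition f) {i : ℕ} (hi : 0 < f i) :
    ((hook f i 0 : ℕ) : ZMod n) = ((bseq f i + colLen f 0 - 1 : ℤ) : ZMod n) := by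
  have h1 : (hook f i 0 : ℤ) = bseq f i - gap f 0 := hook_cast hfp hi
  have h2 : (hook f i 0 : ℤ) = bseq f i + colLen f 0 - 1 := by unfold gap at h1; omega
  calc ((hook f i 0 : ℕ) : ZMod n) = (((hook f i 0 : ℕ) : ℤ) : ZMod n) :=
        (Int.cast_natCast _).symm
    _ = _ := by rw [h2]

lemma kept_iff (hk : 1 ≤ k) (hfp : IsPartition f) (hf0 : f 0 = k) (i : ℕ) :
    keptRowA n f i ↔ (0 < f i ∧ bseq f i ∉ Cset n k) := by
  have hb0 : bseq f 0 = (k : ℤ) := by unfold bseq; rw [hf0]; push_cast; ring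
  have hfi0 : 0 < f 0 := by omega
  have h0 := hook_zmod (n := n) hfp hfi0
  rw [hb0] at h0
  unfold keptRowA
  constructor
  · rintro ⟨hpos, hne⟩
    refine ⟨hpos, fun hC => hne ?_⟩
    rw [hook_zmod hfp hpos, h0]
    have hC2 : ((bseq f i : ℤ) : ZMod n) = (((k : ℤ)) : ZMod n) := hC.2
    push_cast at hC2 ⊢
    linear_combination hC2
  · rintro ⟨hpos, hnC⟩
    refine ⟨hpos, fun heq => hnC ?_⟩
    rw [hook_zmod hfp hpos, h0] at heq
    have hle : bseq f i ≤ (k : ℤ) := by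
      have := bseq_le hfp i; rw [hf0] at this; exact this
    refine ⟨hle, ?_⟩
    push_cast at heq ⊢
    linear_combination heq

lemma kept_zero : ¬ keptRowA n f 0 := fun h => h.2 rfl

lemma kept_iff' (hk : 1 ≤ k) (hfp : IsPartition f) (hf0 : f 0 = k) (i : ℕ) :
    keptRowA n f i ↔ (Qp n k f i ∧ i < colLen f 0) := by
  rw [kept_iff hk hfp hf0, lt_colLen_iff hfp i 0]
  unfold Qp
  tauto

lemma kept_finite (hk : 1 ≤ k) (hfp : IsPartition f) (hf0 : f 0 = k) :
    (setOf (keptRowA n f)).Finite := by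
  apply (Set.finite_Iio (colLen f 0)).subset
  intro i hi
  exact Set.mem_Iio.mpr ((kept_iff' hk hfp hf0 i).mp hi).2

lemma not_both_mem (hn : 2 ≤ n) {a : ℤ} (ha : a ∈ Cset n k) (hb : a + 1 ∈ Cset n k) :
    False := by
  have h1 : (((1 : ℤ)) : ZMod n) = 0 := by
    have e1 := ha.2
    have e2 := hb.2
    have : ((a + 1 : ℤ) : ZMod n) = ((a : ℤ) : ZMod n) := by rw [e1, e2]
    push_cast at this
    linear_combination this
  have h2 : (n : ℤ) ∣ 1 := (ZMod.intCast_zmod_eq_zero_iff_dvd 1 n).mp h1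
  have h3 := Int.le_of_dvd one_pos h2
  omega

lemma Qp_infinite (hn : 2 ≤ n) (hfp : IsPartition f) : (setOf (Qp n k f)).Infinite := by
  by_contra hinf
  rw [Set.not_infinite] at hinf
  obtain ⟨N, hN⟩ := hfp.2
  obtain ⟨M, hM⟩ := hinf.bddAbove
  set i₀ : ℕ := max (M + 1) N with hi₀
  have hmem : ∀ j, i₀ ≤ j → bseq f j ∈ Cset n k := by
    intro j hj
    by_contra hq
    have : j ∈ setOf (Qp n k f) := hq
    have := hM this
    omega
  have hz : ∀ j, i₀ ≤ j → bseq f j = -(j : ℤ) := by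
    intro j hj
    have : f j = 0 := hN j (by omega)
    unfold bseq; rw [this]; omega
  have ha := hmem (i₀ + 1) (by omega)
  have hb := hmem i₀ (by omega)
  rw [hz _ (by omega)] at ha
  rw [hz _ (by omega)] at hb
  refine not_both_mem (k := k) hn (a := -((i₀ : ℤ) + 1)) ?_ ?_
  · have he : -((i₀ : ℤ) + 1) = -(((i₀ + 1 : ℕ) : ℤ)) := by push_cast; ring
    rw [he]
    exact ha
  · have he : -((i₀ : ℤ) + 1) + 1 = -(i₀ : ℤ) := by ring
    rw [he]
    exact hb

/-! ### `PhiA` along the enumeration of `Qp` -/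

lemma count_congr_lt {p q : ℕ → Prop} [DecidablePred p] [DecidablePred q] {m : ℕ}
    (h : ∀ i < m, (p i ↔ q i)) : Nat.count p m = Nat.count q m := by
  rw [Nat.count_eq_card_filter_range, Nat.count_eq_card_filter_range]
  congr 1
  exact Finset.filter_congr (fun x hx => h x (Finset.mem_range.mp hx))

lemma card_setOf_kept (hk : 1 ≤ k) (hfp : IsPartition f) (hf0 : f 0 = k) :
    haveI := Classical.decPred (Qp n k f)
    Nat.card (setOf (keptRowA n f)) = Nat.count (Qp n k f) (colLen f 0) := by
  classical
  rw [Nat.card_coe_set_eq, Nat.count_eq_card_filter_range, ← Set.ncard_coe_finset]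
  congr 1
  ext i
  simp only [Set.mem_setOf_eq, Finset.coe_filter, Finset.mem_range, Set.mem_setOf_eq]
  show keptRowA n f i ↔ _
  rw [kept_iff' hk hfp hf0]
  tauto

lemma PhiA_eq (hn : 2 ≤ n) (hk : 1 ≤ k) (hfp : IsPartition f) (hf0 : f 0 = k) (s : ℕ) :
    PhiA n f s = f (Nat.nth (Qp n k f) s) := by
  classical
  have hQinf : (setOf (Qp n k f)).Infinite := Qp_infinite hn hfp
  have hPfin : (setOf (keptRowA n f)).Finite := kept_finite hk hfp hf0
  have hPQ := kept_iff' (n := n) hk hfp hf0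
  have hT := card_setOf_kept (n := n) hk hfp hf0
  have hcardT : Nat.card (setOf (keptRowA n f)) = hPfin.toFinset.card := by
    rw [Nat.card_coe_set_eq, Set.ncard_eq_toFinset_card _ hPfin]
  by_cases hs : s < Nat.card (setOf (keptRowA n f))
  · have hJL : Nat.nth (Qp n k f) s < colLen f 0 := by
      by_contra hge
      have h1 : Nat.count (Qp n k f) (colLen f 0) ≤ Nat.count (Qp n k f) (Nat.nth (Qp n k f) s) :=
        Nat.count_monotone _ (le_of_not_gt hge)
      rw [Nat.count_nth_of_infinite hQinf] at h1
      omega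
    have hm : keptRowA n f (Nat.nth (keptRowA n f) s) :=
      Nat.nth_mem_of_lt_card hPfin (by have := hs.trans_eq hcardT; exact this)
    have hmL : Nat.nth (keptRowA n f) s < colLen f 0 := ((hPQ _).mp hm).2
    have hcnt : Nat.count (keptRowA n f) (Nat.nth (keptRowA n f) s) = s :=
      Nat.count_nth_of_lt_card_finite hPfin (by have := hs.trans_eq hcardT; exact this)
    have hcc : Nat.count (Qp n k f) (Nat.nth (keptRowA n f) s) = s := by
      have heq : Nat.count (Qp n k f) (Nat.nth (keptRowA n f) s) =
          Nat.count (keptRowA n f) (Nat.nth (keptRowA n f) s) := by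
        apply count_congr_lt
        intro i hi
        rw [hPQ i]
        constructor
        · intro h; exact ⟨h, by omega⟩
        · intro h; exact h.1
      omega
    have hnn : Nat.nth (Qp n k f) s = Nat.nth (keptRowA n f) s := by
      conv_lhs => rw [← hcc]
      exact Nat.nth_count ((hPQ _).mp hm).1
    rw [hnn]
    show Nat.card {j : ℕ | keptRowA n f (Nat.nth (keptRowA n f) s) ∧
      j < f (Nat.nth (keptRowA n f) s)} = _
    have hset : {j : ℕ | keptRowA n f (Nat.nth (keptRowA n f) s) ∧
        j < f (Nat.nth (keptRowA n f) s)} = Set.Iio (f (Nat.nth (keptRowA n f) s)) := by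
      ext j; simp [hm, Set.mem_Iio]
    rw [hset, Nat.card_coe_set_eq, ← Finset.coe_Iio, Set.ncard_coe_finset, Nat.card_Iio]
  · have hnth0 : Nat.nth (keptRowA n f) s = 0 :=
      Nat.nth_eq_zero.mpr (Or.inr ⟨hPfin, by have := hcardT.symm.trans_le (not_lt.mp hs); exact this⟩)
    have hJL : colLen f 0 ≤ Nat.nth (Qp n k f) s := by
      by_contra hlt
      push_neg at hlt
      have hq : Qp n k f (Nat.nth (Qp n k f) s) := Nat.nth_mem_of_infinite hQinf s
      have h1 : Nat.count (Qp n k f) (Nat.nth (Qp n k f) s) + 1 =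
          Nat.count (Qp n k f) (Nat.nth (Qp n k f) s + 1) := by
        rw [Nat.count_succ, if_pos hq]
      have h2 : Nat.count (Qp n k f) (Nat.nth (Qp n k f) s + 1) ≤
          Nat.count (Qp n k f) (colLen f 0) := Nat.count_monotone _ (by omega)
      rw [Nat.count_nth_of_infinite hQinf] at h1
      omega
    have hfz : f (Nat.nth (Qp n k f) s) = 0 := zero_of_colLen_le hfp _ hJL
    rw [hfz]
    show Nat.card {j : ℕ | keptRowA n f (Nat.nth (keptRowA n f) s) ∧
      j < f (Nat.nth (keptRowA n f) s)} = 0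
    rw [hnth0]
    have hset : {j : ℕ | keptRowA n f 0 ∧ j < f 0} = (∅ : Set ℕ) := by
      ext j; simp [kept_zero]
    rw [hset]
    simp

lemma J_sub_count (hn : 2 ≤ n) (hfp : IsPartition f) (hfc : IsCore n f) (hf0 : f 0 = k)
    (s : ℕ) :
    ((Nat.nth (Qp n k f) s : ℕ) : ℤ) - s =
      Nat.card ↥(Cset n k ∩ Set.Ioi (bseq f (Nat.nth (Qp n k f) s))) := by
  classical
  have hQinf : (setOf (Qp n k f)).Infinite := Qp_infinite hn hfp
  have hcount : Nat.count (Qp n k f) (Nat.nth (Qp n k f) s) = s :=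
    Nat.count_nth_of_infinite hQinf s
  have hsplit : Nat.count (Qp n k f) (Nat.nth (Qp n k f) s) +
      Nat.count (fun i => ¬ Qp n k f i) (Nat.nth (Qp n k f) s) = Nat.nth (Qp n k f) s := by
    rw [Nat.count_eq_card_filter_range, Nat.count_eq_card_filter_range,
      Finset.card_filter_add_card_filter_not, Finset.card_range]
  have himg : Cset n k ∩ Set.Ioi (bseq f (Nat.nth (Qp n k f) s)) =
      bseq f '' {i : ℕ | ¬ Qp n k f i ∧ i < Nat.nth (Qp n k f) s} := by
    ext x
    constructor
    · rintro ⟨hxC, hxgt⟩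
      obtain ⟨i, hi⟩ := Cset_subset hfp hfc (by omega) hf0 hxC
      refine ⟨i, ⟨?_, ?_⟩, hi⟩
      · unfold Qp; rw [hi]; exact not_not_intro hxC
      · rw [← hi] at hxgt
        exact (bseq_strictAnti hfp).lt_iff_gt.mp hxgt
    · rintro ⟨i, ⟨hiC, him⟩, rfl⟩
      refine ⟨not_not.mp hiC, ?_⟩
      exact bseq_strictAnti hfp him
  rw [himg, Nat.card_coe_set_eq,
    Set.ncard_image_of_injective _ (bseq_strictAnti hfp).injective]
  have hnc : {i : ℕ | ¬ Qp n k f i ∧ i < Nat.nth (Qp n k f) s}.ncard =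
      Nat.count (fun i => ¬ Qp n k f i) (Nat.nth (Qp n k f) s) := by
    rw [Nat.count_eq_card_filter_range, ← Set.ncard_coe_finset]
    congr 1
    ext i
    simp only [Set.mem_setOf_eq, Finset.coe_filter, Finset.mem_range]
    tauto
  rw [hnc]
  omega

/-! ### The collapse map ψ -/

noncomputable def psi (n k : ℕ) (x : ℤ) : ℤ := x + ((Cset n k ∩ Set.Ioi x).ncard : ℤ)

lemma Cfin (x : ℤ) : (Cset n k ∩ Set.Ioi x).Finite := by
  apply (Set.finite_Ioc x (k : ℤ)).subset
  rintro c ⟨hc, hx⟩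
  exact ⟨hx, hc.1⟩

lemma Cfin' (x y : ℤ) : (Cset n k ∩ Set.Ioc x y).Finite := by
  apply (Cfin (n := n) (k := k) x).subset
  rintro c ⟨hc, hx⟩
  exact ⟨hc, hx.1⟩

lemma card_split {x y : ℤ} (hxy : x ≤ y) :
    (Cset n k ∩ Set.Ioi x).ncard =
      (Cset n k ∩ Set.Ioi y).ncard + (Cset n k ∩ Set.Ioc x y).ncard := by
  rw [← Set.ncard_union_eq ?disj (Cfin y) (Cfin' x y)]
  case disj =>
    rw [Set.disjoint_left]
    rintro c ⟨_, h1⟩ ⟨_, h2⟩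
    simp only [Set.mem_Ioi] at h1
    simp only [Set.mem_Ioc] at h2
    omega
  congr 1
  ext c
  simp only [Set.mem_inter_iff, Set.mem_Ioi, Set.mem_union, Set.mem_Ioc]
  constructor
  · rintro ⟨hC, hx⟩
    by_cases h : y < c
    · exact Or.inl ⟨hC, h⟩
    · exact Or.inr ⟨hC, hx, by omega⟩
  · rintro (⟨hC, h⟩ | ⟨hC, h1, h2⟩)
    · exact ⟨hC, by omega⟩
    · exact ⟨hC, h1⟩

lemma card_Ioc_le (x y : ℤ) : (Cset n k ∩ Set.Ioc x y).ncard ≤ (y - x).toNat := by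
  calc (Cset n k ∩ Set.Ioc x y).ncard ≤ (Set.Ioc x y).ncard :=
        Set.ncard_le_ncard Set.inter_subset_right (Set.finite_Ioc x y)
    _ = (y - x).toNat := by
        rw [← Finset.coe_Ioc, Set.ncard_coe_finset, Int.card_Ioc]

lemma psi_mono : Monotone (psi n k) := by
  intro x y hxy
  unfold psi
  have hs := card_split (n := n) (k := k) hxy
  have hb := card_Ioc_le (n := n) (k := k) x y
  omega

lemma psi_strict {x y : ℤ} (hxy : x < y) (hy : y ∉ Cset n k) :
    psi n k x < psi n k y := by
  have hs := card_split (n := n) (k := k) (le_of_lt hxy)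
  have hsub : (Cset n k ∩ Set.Ioc x y).ncard ≤ (y - 1 - x).toNat := by
    calc (Cset n k ∩ Set.Ioc x y).ncard ≤ (Cset n k ∩ Set.Ioc x (y - 1)).ncard := by
          apply Set.ncard_le_ncard _ (Cfin' x (y - 1))
          rintro c ⟨hC, h1, h2⟩
          have : c ≠ y := fun h => hy (h ▸ hC)
          exact ⟨hC, h1, by omega⟩
      _ ≤ (y - 1 - x).toNat := card_Ioc_le x (y - 1)
  unfold psi
  omega

lemma psi_ge (x : ℤ) : x ≤ psi n k x := by unfold psi; omega

lemma card_pair (hn : 2 ≤ n) (x : ℤ) : (Cset n k ∩ Set.Ioc x (x + 2)).ncard ≤ 1 := by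
  by_cases h : (x + 1) ∈ Cset n k
  · have hx2 : (x + 2) ∉ Cset n k := by
      intro h2
      exact not_both_mem hn h (by convert h2 using 1; ring)
    have hsub : Cset n k ∩ Set.Ioc x (x + 2) ⊆ {x + 1} := by
      rintro c ⟨hC, h1, h2⟩
      have : c ≠ x + 2 := fun hc => hx2 (hc ▸ hC)
      simp only [Set.mem_singleton_iff]
      omega
    calc _ ≤ ({x + 1} : Set ℤ).ncard :=
          Set.ncard_le_ncard hsub (Set.finite_singleton _)
      _ = 1 := Set.ncard_singleton _
  · have hsub : Cset n k ∩ Set.Ioc x (x + 2) ⊆ {x + 2} := by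
      rintro c ⟨hC, h1, h2⟩
      have : c ≠ x + 1 := fun hc => h (hc ▸ hC)
      simp only [Set.mem_singleton_iff]
      omega
    calc _ ≤ ({x + 2} : Set ℤ).ncard :=
          Set.ncard_le_ncard hsub (Set.finite_singleton _)
      _ = 1 := Set.ncard_singleton _

lemma card_bound (hn : 2 ≤ n) (m : ℕ) :
    (Cset n k ∩ Set.Ioi ((k : ℤ) - 2 * (m : ℤ))).ncard ≤ m := by
  induction m with
  | zero =>
      have : Cset n k ∩ Set.Ioi ((k : ℤ) - 2 * ((0 : ℕ) : ℤ)) = ∅ := by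
        ext c
        simp only [Set.mem_inter_iff, Set.mem_Ioi, Set.mem_empty_iff_false, iff_false]
        rintro ⟨hC, hgt⟩
        have := hC.1
        push_cast at hgt
        omega
      rw [this]
      simp
  | succ m ih =>
      have hxy : (k : ℤ) - 2 * ((m + 1 : ℕ) : ℤ) ≤ (k : ℤ) - 2 * (m : ℤ) := by
        push_cast; omega
      have hsplit := card_split (n := n) (k := k) hxy
      have hp := card_pair (n := n) (k := k) hn ((k : ℤ) - 2 * ((m + 1 : ℕ) : ℤ))
      have he : (k : ℤ) - 2 * ((m + 1 : ℕ) : ℤ) + 2 = (k : ℤ) - 2 * (m : ℤ) := by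
        push_cast; ring
      rw [he] at hp
      omega

lemma psi_lt (hn : 2 ≤ n) (t : ℤ) : ∃ x : ℤ, psi n k x < t := by
  set m : ℕ := ((k : ℤ) - t).toNat + 1 with hm
  refine ⟨(k : ℤ) - 2 * (m : ℤ), ?_⟩
  have hb := card_bound (n := n) (k := k) hn m
  unfold psi
  omega

lemma exists_least (hn : 2 ≤ n) (t : ℤ) :
    ∃ u : ℤ, (t ≤ psi n k u ∧ ∀ y, t ≤ psi n k y → u ≤ y) ∧ u ∉ Cset n k := by
  classical
  obtain ⟨x₀, hx₀⟩ := psi_lt (n := n) (k := k) hn t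
  have hbdd : ∃ b : ℤ, ∀ z, t ≤ psi n k z → b ≤ z := by
    refine ⟨x₀, fun z hz => ?_⟩
    by_contra h
    push_neg at h
    have := psi_mono (n := n) (k := k) (le_of_lt h)
    omega
  have hinh : ∃ z : ℤ, t ≤ psi n k z :=
    ⟨max t (k : ℤ), le_trans (le_max_left _ _) (psi_ge _)⟩
  obtain ⟨u, hu, hmin⟩ := Int.exists_least_of_bdd hbdd hinh
  refine ⟨u, ⟨hu, hmin⟩, ?_⟩
  intro huC
  have h1 : ¬ t ≤ psi n k (u - 1) := fun h => by have := hmin _ h; omega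
  have hsplit := card_split (n := n) (k := k) (x := u - 1) (y := u) (by omega)
  have hset : (Cset n k ∩ Set.Ioc (u - 1) u) = {u} := by
    ext c
    simp only [Set.mem_inter_iff, Set.mem_Ioc, Set.mem_singleton_iff]
    constructor
    · rintro ⟨hC, h2, h3⟩; omega
    · rintro rfl; exact ⟨huC, by omega, le_refl _⟩
  rw [hset, Set.ncard_singleton] at hsplit
  unfold psi at h1 hu
  omega

/-! ### Counting comparison lemmas -/

lemma CIci_finite (u : ℤ) : (Cset n k ∩ Set.Ici u).Finite := by
  apply (Set.finite_Icc u (k : ℤ)).subset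
  rintro c ⟨hc, hx⟩
  exact ⟨hx, hc.1⟩

lemma idxset_finite (hfp : IsPartition f) (u : ℤ) : {i : ℕ | u ≤ bseq f i}.Finite :=
  countset_finite f hfp.1 u

lemma Erange_eq (u : ℤ) :
    Set.range (bseq f) ∩ Set.Ici u = bseq f '' {i : ℕ | u ≤ bseq f i} := by
  ext x
  constructor
  · rintro ⟨⟨i, rfl⟩, hu⟩
    exact ⟨i, hu, rfl⟩
  · rintro ⟨i, hi, rfl⟩
    exact ⟨⟨i, rfl⟩, hi⟩

lemma Efin (hfp : IsPartition f) (u : ℤ) : (Set.range (bseq f) ∩ Set.Ici u).Finite := by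
  rw [Erange_eq]
  exact (idxset_finite hfp u).image _

lemma Ecard_eq (hfp : IsPartition f) (u : ℤ) :
    (Set.range (bseq f) ∩ Set.Ici u).ncard = Nat.card {i : ℕ | u ≤ (f i : ℤ) - (i : ℤ)} := by
  rw [Erange_eq, Set.ncard_image_of_injective _ (bseq_strictAnti hfp).injective,
    Nat.card_coe_set_eq]
  rfl

lemma Ecard_succ (hfp : IsPartition f) (u : ℤ) (hu : u ∈ Set.range (bseq f)) :
    (Set.range (bseq f) ∩ Set.Ici u).ncard =
      (Set.range (bseq f) ∩ Set.Ici (u + 1)).ncard + 1 := by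
  have hins : Set.range (bseq f) ∩ Set.Ici u =
      insert u (Set.range (bseq f) ∩ Set.Ici (u + 1)) := by
    ext x
    simp only [Set.mem_inter_iff, Set.mem_Ici, Set.mem_insert_iff]
    constructor
    · rintro ⟨hr, hx⟩
      by_cases h : x = u
      · exact Or.inl h
      · exact Or.inr ⟨hr, by omega⟩
    · rintro (rfl | ⟨hr, hx⟩)
      · exact ⟨hu, le_refl _⟩
      · exact ⟨hr, by omega⟩
  have hnotmem : u ∉ Set.range (bseq f) ∩ Set.Ici (u + 1) := by
    rintro ⟨_, hx⟩
    simp only [Set.mem_Ici] at hx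
    omega
  rw [hins, Set.ncard_insert_of_notMem hnotmem (Efin hfp (u + 1))]

lemma Nprime_eq (hn : 2 ≤ n) (hk : 1 ≤ k) (hfp : IsPartition f) (hfc : IsCore n f)
    (hf0 : f 0 = k) (t u : ℤ)
    (hiff : ∀ x, x ∈ Set.range (bseq f) → x ∉ Cset n k → (t ≤ psi n k x ↔ u ≤ x)) :
    Nat.card {s : ℕ | t ≤ (PhiA n f s : ℤ) - (s : ℤ)} =
      (Set.range (bseq f) ∩ Set.Ici u).ncard - (Cset n k ∩ Set.Ici u).ncard := by
  classical
  have hQinf := Qp_infinite (k := k) hn hfp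
  have hphi : ∀ s : ℕ, (PhiA n f s : ℤ) - (s : ℤ) =
      psi n k (bseq f (Nat.nth (Qp n k f) s)) := by
    intro s
    have h1 := PhiA_eq hn hk hfp hf0 s
    have h2 := J_sub_count hn hfp hfc hf0 s
    rw [Nat.card_coe_set_eq] at h2
    unfold psi
    have h3 : bseq f (Nat.nth (Qp n k f) s) =
        (f (Nat.nth (Qp n k f) s) : ℤ) - (Nat.nth (Qp n k f) s : ℤ) := rfl
    rw [h1]
    omega
  have hsets : {s : ℕ | t ≤ (PhiA n f s : ℤ) - (s : ℤ)} =
      {s : ℕ | t ≤ psi n k (bseq f (Nat.nth (Qp n k f) s))} := by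
    ext s; rw [Set.mem_setOf_eq, Set.mem_setOf_eq, hphi s]
  rw [hsets, Nat.card_coe_set_eq]
  have hinj : Function.Injective (fun s : ℕ => bseq f (Nat.nth (Qp n k f) s)) := by
    intro a b hab
    exact (Nat.nth_strictMono hQinf).injective ((bseq_strictAnti hfp).injective hab)
  rw [← Set.ncard_image_of_injective _ hinj]
  have himg : (fun s : ℕ => bseq f (Nat.nth (Qp n k f) s)) ''
        {s : ℕ | t ≤ psi n k (bseq f (Nat.nth (Qp n k f) s))} =
      (Set.range (bseq f) ∩ Set.Ici u) \ (Cset n k ∩ Set.Ici u) := by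
    ext x
    constructor
    · rintro ⟨s, hs, rfl⟩
      have hq : Qp n k f (Nat.nth (Qp n k f) s) := Nat.nth_mem_of_infinite hQinf s
      have hmem : bseq f (Nat.nth (Qp n k f) s) ∈ Set.range (bseq f) := ⟨_, rfl⟩
      have hnotC : bseq f (Nat.nth (Qp n k f) s) ∉ Cset n k := hq
      have hux := (hiff _ hmem hnotC).mp hs
      exact ⟨⟨hmem, hux⟩, fun hc => hnotC hc.1⟩
    · rintro ⟨⟨hmem, hux⟩, hnot⟩
      have hnotC : x ∉ Cset n k := fun hc => hnot ⟨hc, hux⟩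
      obtain ⟨i, hi⟩ := hmem
      have hqi : Qp n k f i := by unfold Qp; rw [hi]; exact hnotC
      have hnth : Nat.nth (Qp n k f) (Nat.count (Qp n k f) i) = i := Nat.nth_count hqi
      refine ⟨Nat.count (Qp n k f) i, ?_, by
        show bseq f (Nat.nth (Qp n k f) (Nat.count (Qp n k f) i)) = x
        rw [hnth, hi]⟩
      rw [Set.mem_setOf_eq, hnth, hi]
      exact (hiff x ⟨i, hi⟩ hnotC).mpr hux
  rw [himg]
  apply Set.ncard_diff ?sub (CIci_finite u)
  case sub =>
    rintro x ⟨hC, hx⟩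
    exact ⟨Cset_subset hfp hfc (by omega) hf0 hC, hx⟩

lemma PhiA_anti (hn : 2 ≤ n) (hk : 1 ≤ k) (hfp : IsPartition f) (hf0 : f 0 = k) :
    Antitone (PhiA n f) := by
  intro a b hab
  rw [PhiA_eq hn hk hfp hf0 a, PhiA_eq hn hk hfp hf0 b]
  exact hfp.1 (Nat.nth_monotone (Qp_infinite (k := k) hn hfp) hab)

end Stmt16Aux

/-- For `n`-cores `f, g` with first part `k` (indexing minimal length coset representatives
of the affine symmetric group modulo the symmetric group), `f ≥ g` in strong Bruhat order
(containment of cores) iff `Φₙ(f) ≥ Φₙ(g)` in the rank `n-1` quotient. -/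
theorem stmt16 (n k : ℕ) (hn : 2 ≤ n) (hk : 1 ≤ k) (f g : ℕ → ℕ)
    (hfp : IsPartition f) (hfc : IsCore n f) (hf0 : f 0 = k)
    (hgp : IsPartition g) (hgc : IsCore n g) (hg0 : g 0 = k) :
    (∀ i, g i ≤ f i) ↔ (∀ i, PhiA n g i ≤ PhiA n f i) := by
  classical
  have step1 : (∀ i, g i ≤ f i) ↔ ∀ u : ℤ,
      (Set.range (Stmt16Aux.bseq g) ∩ Set.Ici u).ncard ≤
        (Set.range (Stmt16Aux.bseq f) ∩ Set.Ici u).ncard :=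
    (Stmt16Aux.count_le_iff f g hfp.1 hgp.1).trans
      (forall_congr' fun u => by
        rw [Stmt16Aux.Ecard_eq hgp u, Stmt16Aux.Ecard_eq hfp u])
  have step2 : (∀ i, PhiA n g i ≤ PhiA n f i) ↔ ∀ t : ℤ,
      Nat.card {s : ℕ | t ≤ (PhiA n g s : ℤ) - (s : ℤ)} ≤
        Nat.card {s : ℕ | t ≤ (PhiA n f s : ℤ) - (s : ℤ)} :=
    Stmt16Aux.count_le_iff (PhiA n f) (PhiA n g)
      (Stmt16Aux.PhiA_anti hn hk hfp hf0) (Stmt16Aux.PhiA_anti hn hk hgp hg0)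
  rw [step1, step2]
  constructor
  · intro hE t
    obtain ⟨u, ⟨hu1, hu2⟩, huC⟩ := Stmt16Aux.exists_least (n := n) (k := k) hn t
    have hiff : ∀ x : ℤ, (t ≤ Stmt16Aux.psi n k x ↔ u ≤ x) := by
      intro x
      constructor
      · exact hu2 x
      · intro hux
        exact le_trans hu1 (Stmt16Aux.psi_mono hux)
    rw [Stmt16Aux.Nprime_eq hn hk hfp hfc hf0 t u (fun x _ _ => hiff x),
      Stmt16Aux.Nprime_eq hn hk hgp hgc hg0 t u (fun x _ _ => hiff x)]
    exact Nat.sub_le_sub_right (hE u) _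
  · intro hN
    have key : ∀ u : ℤ, u ∉ Stmt16Aux.Cset n k →
        (Set.range (Stmt16Aux.bseq g) ∩ Set.Ici u).ncard ≤
          (Set.range (Stmt16Aux.bseq f) ∩ Set.Ici u).ncard := by
      intro u huC
      have hiff : ∀ x : ℤ, x ∉ Stmt16Aux.Cset n k →
          (Stmt16Aux.psi n k u ≤ Stmt16Aux.psi n k x ↔ u ≤ x) := by
        intro x hxC
        constructor
        · intro hp
          by_contra hlt
          push_neg at hlt
          exact absurd hp (not_le.mpr (Stmt16Aux.psi_strict hlt huC))
        · exact fun h => Stmt16Aux.psi_mono h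
      have hNf := Stmt16Aux.Nprime_eq hn hk hfp hfc hf0 (Stmt16Aux.psi n k u) u
        (fun x _ hxC => hiff x hxC)
      have hNg := Stmt16Aux.Nprime_eq hn hk hgp hgc hg0 (Stmt16Aux.psi n k u) u
        (fun x _ hxC => hiff x hxC)
      have hcf : (Stmt16Aux.Cset n k ∩ Set.Ici u).ncard ≤
          (Set.range (Stmt16Aux.bseq f) ∩ Set.Ici u).ncard := by
        apply Set.ncard_le_ncard _ (Stmt16Aux.Efin hfp u)
        rintro x ⟨h1, h2⟩
        exact ⟨Stmt16Aux.Cset_subset hfp hfc (by omega) hf0 h1, h2⟩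
      have hcg : (Stmt16Aux.Cset n k ∩ Set.Ici u).ncard ≤
          (Set.range (Stmt16Aux.bseq g) ∩ Set.Ici u).ncard := by
        apply Set.ncard_le_ncard _ (Stmt16Aux.Efin hgp u)
        rintro x ⟨h1, h2⟩
        exact ⟨Stmt16Aux.Cset_subset hgp hgc (by omega) hg0 h1, h2⟩
      have hcmp := hN (Stmt16Aux.psi n k u)
      rw [hNf, hNg] at hcmp
      omega
    intro u
    by_cases huC : u ∈ Stmt16Aux.Cset n k
    · have hu1 : u + 1 ∉ Stmt16Aux.Cset n k := fun h =>
        Stmt16Aux.not_both_mem hn huC h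
      have ef := Stmt16Aux.Ecard_succ hfp u
        (Stmt16Aux.Cset_subset hfp hfc (by omega) hf0 huC)
      have eg := Stmt16Aux.Ecard_succ hgp u
        (Stmt16Aux.Cset_subset hgp hgc (by omega) hg0 huC)
      have := key (u + 1) hu1
      omega
    · exact key u huC
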